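/- In minimum-cost weighted sorting of an unweighted star with token permutation having ℓ ≥ 1 nontrivial locked cycles, every swap sequence must contain, beyond the D_w token-moves along shortest paths, at least 2ℓ additional token moves (two per nontrivial locked cycle). -/

import Mathlib

/-- Distance between two vertices of the star with center `0` on `Fin (n+1)`. -/
def starDist (n : ℕ) (u v : Fin (n + 1)) : ℕ :=
  if u = v then 0 else if u = 0 ∨ v = 0 then 1 else 2

/-- Star token swapping: a swap exchanges the center token with a leaf token. -/
def applyStarSwaps (n : ℕ) (π : Equiv.Perm (Fin (n + 1))) (s : List (Fin (n + 1))) :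
    Equiv.Perm (Fin (n + 1)) :=
  s.foldl (fun σ v => σ * Equiv.swap 0 v) π

/-- The set of "locked" cycles of `π`: nontrivial cycles avoiding the center `0`. -/
private def lockedSet {m : ℕ} (π : Equiv.Perm (Fin (m + 1))) :
    Finset (Equiv.Perm (Fin (m + 1))) :=
  π.cycleFactorsFinset.filter fun c => c 0 = 0

private lemma locked_core {m : ℕ} {π : Equiv.Perm (Fin (m + 1))} {v : Fin (m + 1)}
    {c : Equiv.Perm (Fin (m + 1))} (hc : c ∈ lockedSet π) (hvc : v ∉ c.support) :
    c ∈ lockedSet (π * Equiv.swap 0 v) := by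
  rw [lockedSet, Finset.mem_filter, Equiv.Perm.mem_cycleFactorsFinset_iff] at hc ⊢
  obtain ⟨⟨hcyc, hagree⟩, hc0⟩ := hc
  refine ⟨⟨hcyc, fun x hx => ?_⟩, hc0⟩
  have hx0 : x ≠ 0 := by
    rintro rfl
    exact (Equiv.Perm.mem_support.mp hx) hc0
  have hxv : x ≠ v := fun h => hvc (h ▸ hx)
  rw [Equiv.Perm.mul_apply, Equiv.swap_apply_of_ne_of_ne hx0 hxv]
  exact hagree x hx

private lemma locked_le_succ {m : ℕ} (π : Equiv.Perm (Fin (m + 1))) (v : Fin (m + 1)) :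
    (lockedSet π).card ≤ (lockedSet (π * Equiv.swap 0 v)).card + 1 := by
  have hsub : lockedSet π ⊆ insert (π.cycleOf v) (lockedSet (π * Equiv.swap 0 v)) := by
    intro c hc
    by_cases hvc : v ∈ c.support
    · exact Finset.mem_insert.mpr (Or.inl
        (Equiv.Perm.cycle_is_cycleOf hvc (Finset.mem_filter.mp hc).1))
    · exact Finset.mem_insert_of_mem (locked_core hc hvc)
  calc (lockedSet π).card ≤ (insert (π.cycleOf v) (lockedSet (π * Equiv.swap 0 v))).card :=
        Finset.card_le_card hsub
    _ ≤ _ := Finset.card_insert_le _ _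

private lemma locked_le {m : ℕ} {π : Equiv.Perm (Fin (m + 1))} {v : Fin (m + 1)}
    (h : π v = v ∨ π.SameCycle 0 v) :
    (lockedSet π).card ≤ (lockedSet (π * Equiv.swap 0 v)).card := by
  refine Finset.card_le_card fun c hc => locked_core hc fun hvc => ?_
  have hcf := (Finset.mem_filter.mp hc).1
  have hc0 : c 0 = 0 := (Finset.mem_filter.mp hc).2
  have hv_supp : v ∈ π.support := Equiv.Perm.mem_cycleFactorsFinset_support_le hcf hvc
  rcases h with h | h
  · exact (Equiv.Perm.mem_support.mp hv_supp) h
  · have hceq : c = π.cycleOf v := Equiv.Perm.cycle_is_cycleOf hvc hcf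
    have h0 : (0 : Fin (m + 1)) ∈ c.support := by
      rw [hceq, Equiv.Perm.mem_support_cycleOf_iff]
      exact ⟨h.symm, hv_supp⟩
    exact (Equiv.Perm.mem_support.mp h0) hc0

private lemma locked_one {m : ℕ} : (lockedSet (1 : Equiv.Perm (Fin (m + 1)))).card = 0 := by
  simp [lockedSet, Equiv.Perm.cycleFactorsFinset_one]

private lemma card_split {α : Type*} [DecidableEq α] (s : Finset α) (a b : α) (hab : a ≠ b) :
    s.card = (s \ {a, b}).card + ((if a ∈ s then 1 else 0) + (if b ∈ s then 1 else 0)) := by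
  have h1 : (s \ {a, b}).card + (s ∩ {a, b}).card = s.card :=
    Finset.card_sdiff_add_card_inter s {a, b}
  have h2 : s ∩ ({a, b} : Finset α) = ({a, b} : Finset α).filter (· ∈ s) := by
    rw [Finset.filter_mem_eq_inter, Finset.inter_comm]
  have h3 : (s ∩ ({a, b} : Finset α)).card
      = (if a ∈ s then 1 else 0) + (if b ∈ s then 1 else 0) := by
    rw [h2]
    rw [show ({a, b} : Finset α) = insert a {b} from rfl, Finset.filter_insert,
      Finset.filter_singleton]
    split_ifs with ha hb hb
    · rw [Finset.card_insert_of_notMem (by simp [hab]), Finset.card_singleton]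
    · simp
    · simp
    · simp
  omega

private lemma supp_eq {m : ℕ} (π : Equiv.Perm (Fin (m + 1))) (v : Fin (m + 1)) (hv : v ≠ 0) :
    π.support.card + ((if π v = 0 then 0 else 1) + (if π 0 = v then 0 else 1))
      = (π * Equiv.swap 0 v).support.card
        + ((if π 0 = 0 then 0 else 1) + (if π v = v then 0 else 1)) := by
  set π' := π * Equiv.swap 0 v with hπ'
  have h0 : π' 0 = π v := by simp [hπ', Equiv.Perm.mul_apply]
  have hvv : π' v = π 0 := by simp [hπ', Equiv.Perm.mul_apply]
  have hagree : ∀ x : Fin (m + 1), x ≠ 0 → x ≠ v → π' x = π x := fun x h1 h2 => by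
    rw [hπ', Equiv.Perm.mul_apply, Equiv.swap_apply_of_ne_of_ne h1 h2]
  have hsd : π.support \ {0, v} = π'.support \ {0, v} := by
    ext x
    simp only [Finset.mem_sdiff, Equiv.Perm.mem_support, Finset.mem_insert, Finset.mem_singleton,
      not_or]
    constructor
    · rintro ⟨hx, h1, h2⟩; exact ⟨by rw [hagree x h1 h2]; exact hx, h1, h2⟩
    · rintro ⟨hx, h1, h2⟩; exact ⟨by rw [← hagree x h1 h2]; exact hx, h1, h2⟩
  have c1 := card_split π.support 0 v (Ne.symm hv)
  have c2 := card_split π'.support 0 v (Ne.symm hv)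
  rw [hsd] at c1
  have e1 : (if (0 : Fin (m+1)) ∈ π.support then 1 else 0) = (if π 0 = 0 then 0 else 1) := by
    by_cases h : π 0 = 0 <;> simp [Equiv.Perm.mem_support, h]
  have e2 : (if v ∈ π.support then 1 else 0) = (if π v = v then 0 else 1) := by
    by_cases h : π v = v <;> simp [Equiv.Perm.mem_support, h]
  have e3 : (if (0 : Fin (m+1)) ∈ π'.support then 1 else 0) = (if π v = 0 then 0 else 1) := by
    by_cases h : π v = 0 <;> simp [Equiv.Perm.mem_support, h0, h]
  have e4 : (if v ∈ π'.support then 1 else 0) = (if π 0 = v then 0 else 1) := by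
    by_cases h : π 0 = v <;> simp [Equiv.Perm.mem_support, hvv, h]
  rw [e1, e2] at c1
  rw [e3, e4] at c2
  omega

private lemma main_ind {m : ℕ} : ∀ (s : List (Fin (m + 1))) (π : Equiv.Perm (Fin (m + 1))),
    (∀ v ∈ s, v ≠ 0) → applyStarSwaps m π s = 1 →
    π.support.card + (lockedSet π).card ≤ s.length + (if π 0 = 0 then 0 else 1)
  | [], π, _, hsort => by
      have hπ : π = 1 := hsort
      subst hπ
      simp [locked_one]
  | v :: s, π, hleaf, hsort => by
      have hv : v ≠ 0 := hleaf v (List.mem_cons_self (a := v) (l := s))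
      have hsort' : applyStarSwaps m (π * Equiv.swap 0 v) s = 1 := hsort
      have IH := main_ind s (π * Equiv.swap 0 v)
        (fun w hw => hleaf w (List.mem_cons_of_mem v hw)) hsort'
      have h0 : (π * Equiv.swap 0 v) 0 = π v := by simp
      rw [h0] at IH
      have hsupp := supp_eq π v hv
      by_cases h0v : π 0 = v
      · have hvv : π v ≠ v := by
          intro h
          exact hv (π.injective (h.trans h0v.symm))
        have hll : (lockedSet π).card ≤ (lockedSet (π * Equiv.swap 0 v)).card :=
          locked_le (Or.inr ⟨1, by simpa using h0v⟩)
        simp only [if_pos h0v, if_neg hvv] at *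
        simp only [List.length_cons]
        generalize (if π v = 0 then (0:ℕ) else 1) = C at IH hsupp ⊢
        generalize (if π 0 = 0 then (0:ℕ) else 1) = A at IH hsupp ⊢
        omega
      · have hll := locked_le_succ π v
        simp only [if_neg h0v] at *
        simp only [List.length_cons]
        have hB : (if π v = v then (0:ℕ) else 1) ≤ 1 := by split_ifs <;> omega
        generalize (if π v = 0 then (0:ℕ) else 1) = C at IH hsupp ⊢
        generalize (if π 0 = 0 then (0:ℕ) else 1) = A at IH hsupp ⊢
        generalize (if π v = v then (0:ℕ) else 1) = B at IH hsupp hB ⊢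
        omega

private lemma sum_ind_two {m : ℕ} (π : Equiv.Perm (Fin (m + 1))) :
    (∑ t : Fin (m + 1), if π t = t then (0:ℕ) else 2) = 2 * π.support.card := by
  have : ∀ t : Fin (m + 1), (if π t = t then (0:ℕ) else 2)
      = (if t ∈ π.support then 2 else 0) := by
    intro t
    by_cases h : π t = t <;> simp [Equiv.Perm.mem_support, h]
  rw [Finset.sum_congr rfl fun t _ => this t, Finset.sum_ite_mem, Finset.univ_inter,
    Finset.sum_const, smul_eq_mul, mul_comm]

private lemma sum_starDist {m : ℕ} (π : Equiv.Perm (Fin (m + 1))) :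
    (∑ t : Fin (m + 1), starDist m (π⁻¹ t) t) + 2 * (if π 0 = 0 then 0 else 1)
      = 2 * π.support.card := by
  by_cases h : π 0 = 0
  · rw [if_pos h, mul_zero, add_zero, ← sum_ind_two π]
    refine Finset.sum_congr rfl fun t _ => ?_
    have hinv : π⁻¹ t = t ↔ t = π t := Equiv.Perm.inv_eq_iff_eq
    have hinv0 : π⁻¹ t = 0 ↔ t = π 0 := Equiv.Perm.inv_eq_iff_eq
    rw [starDist]
    by_cases hA : π t = t
    · rw [if_pos (hinv.mpr hA.symm), if_pos hA]
    · rw [if_neg (fun hc => hA (hinv.mp hc).symm), if_neg hA,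
        if_neg (by
          rintro (hc | hc)
          · have ht0 : t = 0 := (hinv0.mp hc).trans h
            exact hA (by rw [ht0, h])
          · exact hA (by rw [hc, h]))]
  · rw [if_neg h]
    have key : ∀ t : Fin (m + 1), starDist m (π⁻¹ t) t + (if t = 0 ∨ t = π 0 then 1 else 0)
        = (if π t = t then 0 else 2) := by
      intro t
      have hinv : π⁻¹ t = t ↔ t = π t := Equiv.Perm.inv_eq_iff_eq
      have hinv0 : π⁻¹ t = 0 ↔ t = π 0 := Equiv.Perm.inv_eq_iff_eq
      rw [starDist]
      by_cases hA : π t = t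
      · rw [if_pos (hinv.mpr hA.symm), if_pos hA, if_neg]
        rintro (hc | hc)
        · exact h (by rw [← hc, hA])
        · exact h (π.injective (by rw [← hc, hA]))
      · rw [if_neg (fun hc => hA (hinv.mp hc).symm), if_neg hA]
        by_cases hB : t = 0 ∨ t = π 0
        · rw [if_pos hB, if_pos]
          rcases hB with hB | hB
          · exact Or.inr hB
          · exact Or.inl (hinv0.mpr hB)
        · rw [if_neg hB, if_neg]
          rintro (hc | hc)
          · exact hB (Or.inr (hinv0.mp hc))
          · exact hB (Or.inl hc)
    have hsum := Finset.sum_congr rfl fun t (_ : t ∈ Finset.univ) => key t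
    rw [Finset.sum_add_distrib] at hsum
    have hind : (∑ t : Fin (m + 1), if t = 0 ∨ t = π 0 then (1:ℕ) else 0) = 2 := by
      have : ∀ t : Fin (m + 1), (if t = 0 ∨ t = π 0 then (1:ℕ) else 0)
          = (if t ∈ ({0, π 0} : Finset (Fin (m + 1))) then 1 else 0) := by
        intro t; simp [Finset.mem_insert, Finset.mem_singleton]
      rw [Finset.sum_congr rfl fun t _ => this t, Finset.sum_ite_mem, Finset.univ_inter,
        Finset.sum_const, smul_eq_mul, mul_one, Finset.card_insert_of_notMem
          (by simp [Ne.symm h]), Finset.card_singleton]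
    rw [hind] at hsum
    rw [show (2:ℕ) * 1 = 2 from rfl, hsum, sum_ind_two]

/-- If the token permutation on a star has `ℓ ≥ 1` nontrivial locked cycles
(cycles of length ≥ 2 avoiding the center `0`), then every sorting swap sequence
makes, beyond the `D_w = Σ_t d(t)` token moves along shortest paths, at least `2ℓ`
additional token moves (each swap moves two tokens). -/
theorem stmt13 (n : ℕ) (π : Equiv.Perm (Fin (n + 1)))
    (hl : 1 ≤ (π.cycleFactorsFinset.filter fun c => c 0 = 0).card)
    (s : List (Fin (n + 1))) (hleaf : ∀ v ∈ s, v ≠ 0)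
    (hsort : applyStarSwaps n π s = 1) :
    (∑ t : Fin (n + 1), starDist n (π⁻¹ t) t) +
        2 * (π.cycleFactorsFinset.filter fun c => c 0 = 0).card ≤
      2 * s.length := by
  have hmain := main_ind s π hleaf hsort
  have hsum := sum_starDist π
  rw [show (π.cycleFactorsFinset.filter fun c => c 0 = 0) = lockedSet π from rfl]
  generalize (if π 0 = 0 then (0:ℕ) else 1) = A at hmain hsum
  omega
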